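/- Let X be a nonempty closed L-pseudo-Lipschitz subset of the pseudo-Euclidean space ℝ_{(l,p)} with L < 1. Then the squared-distance function ρ(·,X) : ℝ^n → ℝ is continuous. -/

import Mathlib

open Filter Topology Set

noncomputable section

/-- The pseudo-Euclidean space `ℝ_{(l,p)}`: `ℝ^(l+p)` with the Euclidean topology. -/
abbrev PE (l p : ℕ) := EuclideanSpace ℝ (Fin (l + p))

/-- The quadratic form `Q(x) = ‖x‖_l² − ‖x‖_p²`. -/
def Q (l p : ℕ) (x : PE l p) : ℝ :=
  ∑ i : Fin (l + p), if (i : ℕ) < l then (x i) ^ 2 else -((x i) ^ 2)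

/-- The pseudo-scalar product `⟪x,y⟫ = Σ_{i<l} x_i y_i − Σ_{i≥l} x_i y_i`. -/
def pseudoInner (l p : ℕ) (x y : PE l p) : ℝ :=
  ∑ i : Fin (l + p), if (i : ℕ) < l then x i * y i else -(x i * y i)

/-- `‖x‖_l`: the Euclidean norm of the first `l` coordinates. -/
def normL (l p : ℕ) (x : PE l p) : ℝ :=
  Real.sqrt (∑ i : Fin (l + p), if (i : ℕ) < l then (x i) ^ 2 else 0)

/-- `‖x‖_p`: the Euclidean norm of the last `p` coordinates. -/
def normP (l p : ℕ) (x : PE l p) : ℝ :=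
  Real.sqrt (∑ i : Fin (l + p), if (i : ℕ) < l then 0 else (x i) ^ 2)

/-- `X` is acausal: `Q(x−y) > 0` for all distinct `x, y ∈ X`. -/
def Acausal (l p : ℕ) (X : Set (PE l p)) : Prop :=
  ∀ x ∈ X, ∀ y ∈ X, x ≠ y → 0 < Q l p (x - y)

/-- `X` is `L`-pseudo-Lipschitz: `L‖x−y‖_l ≥ ‖x−y‖_p` for all `x, y ∈ X`. -/
def PseudoLipschitz (l p : ℕ) (L : ℝ) (X : Set (PE l p)) : Prop :=
  ∀ x ∈ X, ∀ y ∈ X, normP l p (x - y) ≤ L * normL l p (x - y)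

/-- The squared-distance function `ρ(a,X) = inf {Q(x−a) : x ∈ X}`. -/
def rho (l p : ℕ) (X : Set (PE l p)) (a : PE l p) : ℝ :=
  sInf ((fun x => Q l p (x - a)) '' X)

/-- The set of closest points `m(a) = {x ∈ X : Q(x−a) = ρ(a,X)}`, via its equivalent
description `m(a) = {x ∈ X : ∀ b ∈ X, Q(x−a) ≤ Q(b−a)}`. -/
def mm (l p : ℕ) (X : Set (PE l p)) (a : PE l p) : Set (PE l p) :=
  {x ∈ X | ∀ b ∈ X, Q l p (x - a) ≤ Q l p (b - a)}

/-- The medial axis `M_X`: points with at least two closest points in `X`. -/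
def medialAxis (l p : ℕ) (X : Set (PE l p)) : Set (PE l p) :=
  {a | (mm l p X a).Nontrivial}

/-- The vacant axis `W_X`: points with no closest point in `X`. -/
def vacantAxis (l p : ℕ) (X : Set (PE l p)) : Set (PE l p) :=
  {a | mm l p X a = ∅}

/-- The normal set `N(a) = {x : a ∈ m(x)}`. -/
def NN (l p : ℕ) (X : Set (PE l p)) (a : PE l p) : Set (PE l p) :=
  {x | a ∈ mm l p X x}

/-- The strict normal set `N'(a) = {x : m(x) = {a}}`. -/
def NN' (l p : ℕ) (X : Set (PE l p)) (a : PE l p) : Set (PE l p) :=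
  {x | mm l p X x = {a}}

namespace RhoAux


def Pl (l p : ℕ) (x : PE l p) : PE l p :=
  WithLp.toLp 2 (fun i : Fin (l + p) => if (i : ℕ) < l then x i else 0)
def Pp (l p : ℕ) (x : PE l p) : PE l p :=
  WithLp.toLp 2 (fun i : Fin (l + p) => if (i : ℕ) < l then 0 else x i)

lemma norm_Pl (l p : ℕ) (x : PE l p) : ‖Pl l p x‖ = normL l p x := by
  rw [EuclideanSpace.norm_eq, normL]
  congr 1
  refine Finset.sum_congr rfl fun i _ => ?_
  by_cases h : (i:ℕ) < l <;> simp [Pl, h, sq_abs]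

lemma norm_Pp (l p : ℕ) (x : PE l p) : ‖Pp l p x‖ = normP l p x := by
  rw [EuclideanSpace.norm_eq, normP]
  congr 1
  refine Finset.sum_congr rfl fun i _ => ?_
  by_cases h : (i:ℕ) < l <;> simp [Pp, h, sq_abs]

lemma Pl_sub (l p : ℕ) (x y : PE l p) : Pl l p (x - y) = Pl l p x - Pl l p y := by
  ext i; by_cases h : (i:ℕ) < l <;> simp [Pl, h]

lemma Pp_sub (l p : ℕ) (x y : PE l p) : Pp l p (x - y) = Pp l p x - Pp l p y := by
  ext i; by_cases h : (i:ℕ) < l <;> simp [Pp, h]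

lemma normL_nonneg (l p : ℕ) (x : PE l p) : 0 ≤ normL l p x := Real.sqrt_nonneg _
lemma normP_nonneg (l p : ℕ) (x : PE l p) : 0 ≤ normP l p x := Real.sqrt_nonneg _

lemma normL_le (l p : ℕ) (x : PE l p) : normL l p x ≤ ‖x‖ := by
  rw [← norm_Pl, EuclideanSpace.norm_eq, EuclideanSpace.norm_eq]
  refine Real.sqrt_le_sqrt (Finset.sum_le_sum fun i _ => ?_)
  by_cases h : (i:ℕ) < l <;> simp [Pl, h] <;> positivity

lemma normP_le (l p : ℕ) (x : PE l p) : normP l p x ≤ ‖x‖ := by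
  rw [← norm_Pp, EuclideanSpace.norm_eq, EuclideanSpace.norm_eq]
  refine Real.sqrt_le_sqrt (Finset.sum_le_sum fun i _ => ?_)
  by_cases h : (i:ℕ) < l <;> simp [Pp, h] <;> positivity

lemma Q_eq (l p : ℕ) (x : PE l p) :
    Q l p x = normL l p x ^ 2 - normP l p x ^ 2 := by
  rw [normL, normP, Real.sq_sqrt, Real.sq_sqrt, Q, ← Finset.sum_sub_distrib]
  · refine Finset.sum_congr rfl fun i _ => ?_
    by_cases h : (i:ℕ) < l <;> simp [h]
  · exact Finset.sum_nonneg fun i _ => by by_cases h : (i:ℕ) < l <;> simp [h] <;> positivity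
  · exact Finset.sum_nonneg fun i _ => by by_cases h : (i:ℕ) < l <;> simp [h] <;> positivity

lemma norm_sq_decomp (l p : ℕ) (x : PE l p) :
    ‖x‖ ^ 2 = normL l p x ^ 2 + normP l p x ^ 2 := by
  rw [normL, normP, Real.sq_sqrt, Real.sq_sqrt, EuclideanSpace.norm_eq, Real.sq_sqrt,
    ← Finset.sum_add_distrib]
  · refine Finset.sum_congr rfl fun i _ => ?_
    by_cases h : (i:ℕ) < l <;> simp [h, sq_abs]
  · exact Finset.sum_nonneg fun i _ => by positivity
  · exact Finset.sum_nonneg fun i _ => by by_cases h : (i:ℕ) < l <;> simp [h] <;> positivity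
  · exact Finset.sum_nonneg fun i _ => by by_cases h : (i:ℕ) < l <;> simp [h] <;> positivity

lemma Q_le (l p : ℕ) (x : PE l p) : Q l p x ≤ ‖x‖ ^ 2 := by
  have h1 := normL_le l p x
  have h2 := normP_nonneg l p x
  have h0 := normL_nonneg l p x
  rw [Q_eq]; nlinarith [norm_nonneg x]

lemma neg_le_Q (l p : ℕ) (x : PE l p) : -‖x‖ ^ 2 ≤ Q l p x := by
  have h1 := normP_le l p x
  have h2 := normP_nonneg l p x
  have h0 := normL_nonneg l p x
  rw [Q_eq]; nlinarith [norm_nonneg x]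

-- reverse triangle for normL
lemma normL_sub_le (l p : ℕ) (x y : PE l p) :
    |normL l p x - normL l p y| ≤ ‖x - y‖ := by
  rw [← norm_Pl, ← norm_Pl]
  calc |‖Pl l p x‖ - ‖Pl l p y‖| ≤ ‖Pl l p x - Pl l p y‖ := abs_norm_sub_norm_le _ _
    _ = ‖Pl l p (x - y)‖ := by rw [Pl_sub]
    _ = normL l p (x - y) := norm_Pl l p _
    _ ≤ ‖x - y‖ := normL_le l p _

lemma normP_sub_le (l p : ℕ) (x y : PE l p) :
    |normP l p x - normP l p y| ≤ ‖x - y‖ := by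
  rw [← norm_Pp, ← norm_Pp]
  calc |‖Pp l p x‖ - ‖Pp l p y‖| ≤ ‖Pp l p x - Pp l p y‖ := abs_norm_sub_norm_le _ _
    _ = ‖Pp l p (x - y)‖ := by rw [Pp_sub]
    _ = normP l p (x - y) := norm_Pp l p _
    _ ≤ ‖x - y‖ := normP_le l p _

-- triangle-ish: normL (x) ≤ normL (x - y) + normL y etc.
lemma normL_triangle (l p : ℕ) (x y : PE l p) :
    normL l p (x + y) ≤ normL l p x + normL l p y := by
  rw [← norm_Pl, ← norm_Pl, ← norm_Pl]
  have : Pl l p (x + y) = Pl l p x + Pl l p y := by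
    ext i; by_cases h : (i:ℕ) < l <;> simp [Pl, h]
  rw [this]; exact norm_add_le _ _

lemma normP_triangle (l p : ℕ) (x y : PE l p) :
    normP l p (x + y) ≤ normP l p x + normP l p y := by
  rw [← norm_Pp, ← norm_Pp, ← norm_Pp]
  have : Pp l p (x + y) = Pp l p x + Pp l p y := by
    ext i; by_cases h : (i:ℕ) < l <;> simp [Pp, h]
  rw [this]; exact norm_add_le _ _

lemma Q_diff (l p : ℕ) (u v : PE l p) :
    |Q l p u - Q l p v| ≤ 2 * (‖u‖ + ‖v‖) * ‖u - v‖ := by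
  have h1 := normL_sub_le l p u v
  have h2 := normP_sub_le l p u v
  have a1 := normL_le l p u
  have a2 := normL_le l p v
  have a3 := normP_le l p u
  have a4 := normP_le l p v
  have b1 := normL_nonneg l p u
  have b2 := normL_nonneg l p v
  have b3 := normP_nonneg l p u
  have b4 := normP_nonneg l p v
  rw [Q_eq, Q_eq]
  rw [abs_le] at h1 h2 ⊢
  obtain ⟨h1a, h1b⟩ := h1
  obtain ⟨h2a, h2b⟩ := h2
  constructor <;> nlinarith [norm_nonneg u, norm_nonneg v, norm_nonneg (u - v)]


lemma coercive (l p : ℕ) (L' : ℝ) (hL'0 : 0 ≤ L') (x x₀ a : PE l p)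
    (hP : normP l p (x - x₀) ≤ L' * normL l p (x - x₀))
    (r : ℝ) (hra : ‖x₀ - a‖ ≤ r) (htr : r ≤ normL l p (x - x₀)) :
    (1 - L'^2) * normL l p (x - x₀)^2 - 2*r*(1+L')*normL l p (x - x₀)
      ≤ Q l p (x - a) := by
  set t := normL l p (x - x₀) with htdef
  have hr0 : 0 ≤ r := le_trans (norm_nonneg _) hra
  have h1 : t ≤ normL l p (x - a) + r := by
    have h : x - x₀ = (x - a) + (a - x₀) := by abel
    have h2 : normL l p (a - x₀) ≤ r := by
      refine le_trans (normL_le l p _) ?_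
      rw [norm_sub_rev]; exact hra
    calc t = normL l p ((x - a) + (a - x₀)) := by rw [htdef, ← h]
      _ ≤ normL l p (x - a) + normL l p (a - x₀) := normL_triangle l p _ _
      _ ≤ normL l p (x - a) + r := by linarith
  have h2 : normP l p (x - a) ≤ L' * t + r := by
    have h : x - a = (x - x₀) + (x₀ - a) := by abel
    have h3 : normP l p (x₀ - a) ≤ r := le_trans (normP_le l p _) hra
    calc normP l p (x - a) = normP l p ((x - x₀) + (x₀ - a)) := by rw [← h]
      _ ≤ normP l p (x - x₀) + normP l p (x₀ - a) := normP_triangle l p _ _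
      _ ≤ L' * t + r := by linarith
  have hnL := normL_nonneg l p (x - a)
  have hnP := normP_nonneg l p (x - a)
  rw [Q_eq]
  have key : t - r ≤ normL l p (x - a) := by linarith
  have ht0 : 0 ≤ t - r := by linarith
  nlinarith [mul_nonneg ht0 ht0, sq_nonneg (normL l p (x - a) - (t - r)),
    mul_nonneg (sub_nonneg.2 key) (by linarith : (0:ℝ) ≤ normL l p (x - a) + (t - r)),
    mul_nonneg (sub_nonneg.2 h2) (by linarith [mul_nonneg hL'0 (le_trans hr0 htr)] : (0:ℝ) ≤ normP l p (x - a) + (L' * t + r))]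


end RhoAux

set_option maxHeartbeats 1000000 in
/-- For nonempty closed `L`-pseudo-Lipschitz `X` with `L < 1`, the
squared-distance function `ρ(·,X)` is continuous on `ℝ^n`. -/
theorem rho_continuous (l p : ℕ) (hl : 1 ≤ l) (L : ℝ) (hL : L < 1)
    (X : Set (PE l p)) (hne : X.Nonempty) (hX : IsClosed X)
    (hlip : PseudoLipschitz l p L X) :
    Continuous (rho l p X) := by
  classical
  obtain ⟨x₀, hx₀⟩ := hne
  set L' : ℝ := max L 0 with hL'def
  have hL'0 : 0 ≤ L' := le_max_right _ _
  have hL'1 : L' < 1 := max_lt hL one_pos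
  have hlip' : ∀ x ∈ X, ∀ y ∈ X, normP l p (x - y) ≤ L' * normL l p (x - y) :=
    fun x hx y hy => le_trans (hlip x hx y hy)
      (mul_le_mul_of_nonneg_right (le_max_left _ _) (RhoAux.normL_nonneg l p _))
  have hc : 0 < 1 - L'^2 := by nlinarith
  rw [continuous_iff_continuousAt]
  intro a₀
  set r : ℝ := ‖x₀ - a₀‖ + 1 with hrdef
  have hr1 : 1 ≤ r := le_add_of_nonneg_left (norm_nonneg _)
  have hr0 : 0 < r := lt_of_lt_of_le one_pos hr1
  set T : ℝ := max (max r 1) ((2*r*(1+L') + r^2 + 1)/(1 - L'^2)) with hTdef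
  have hTr : r ≤ T := le_trans (le_max_left _ _) (le_max_left _ _)
  have hT1 : 1 ≤ T := le_trans (le_max_right r 1) (le_max_left _ _)
  have hT0 : 0 < T := lt_of_lt_of_le one_pos hT1
  have hTd : (2*r*(1+L') + r^2 + 1)/(1 - L'^2) ≤ T := le_max_right _ _
  have hTd' : 2*r*(1+L') + r^2 + 1 ≤ (1 - L'^2) * T := by
    rw [div_le_iff₀ hc] at hTd; linarith
  set B : ℝ := Real.sqrt 2 * T with hBdef
  have hB0 : 0 < B := mul_pos (Real.sqrt_pos.2 two_pos) hT0
  have hx₀a : ∀ a : PE l p, ‖a - a₀‖ ≤ 1 → ‖x₀ - a‖ ≤ r := by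
    intro a ha
    have h : x₀ - a = (x₀ - a₀) - (a - a₀) := by abel
    rw [h]
    refine le_trans (norm_sub_le _ _) ?_
    rw [hrdef]; linarith
  have far : ∀ a : PE l p, ‖a - a₀‖ ≤ 1 → ∀ x ∈ X, B ≤ ‖x - x₀‖ →
      r^2 + 1 ≤ Q l p (x - a) := by
    intro a ha x hx hxB
    set t := normL l p (x - x₀) with htdef
    have ht0 : 0 ≤ t := RhoAux.normL_nonneg l p _
    have hP : normP l p (x - x₀) ≤ L' * t := hlip' x hx x₀ hx₀
    have hnorm2 : ‖x - x₀‖^2 ≤ 2 * t^2 := by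
      rw [RhoAux.norm_sq_decomp l p]
      have hnp := RhoAux.normP_nonneg l p (x - x₀)
      nlinarith
    have hB2 : B^2 = 2 * T^2 := by
      rw [hBdef, mul_pow, Real.sq_sqrt (by norm_num : (0:ℝ) ≤ 2)]
    have htT : T ≤ t := by
      nlinarith [norm_nonneg (x - x₀), sq_nonneg (T - t), sq_nonneg (t + T)]
    have hcoer := RhoAux.coercive l p L' hL'0 x x₀ a hP r (hx₀a a ha) (le_trans hTr htT)
    have key1 : r^2 + 1 ≤ (1 - L'^2)*t - 2*r*(1+L') := by
      nlinarith [mul_le_mul_of_nonneg_left htT hc.le]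
    have key2 : 1 ≤ t := le_trans hT1 htT
    nlinarith [mul_nonneg (by linarith : (0:ℝ) ≤ t - 1)
      (by nlinarith [sq_nonneg r] : (0:ℝ) ≤ (1 - L'^2)*t - 2*r*(1+L'))]
  have lower : ∀ a : PE l p, ‖a - a₀‖ ≤ 1 → ∀ x ∈ X, -(B + r)^2 ≤ Q l p (x - a) := by
    intro a ha x hx
    by_cases hfar : B ≤ ‖x - x₀‖
    · have h := far a ha x hx hfar
      nlinarith [sq_nonneg (B + r), sq_nonneg r]
    · push_neg at hfar
      have hxa : ‖x - a‖ ≤ B + r := by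
        have h : x - a = (x - x₀) + (x₀ - a) := by abel
        rw [h]; exact le_trans (norm_add_le _ _) (by linarith [hx₀a a ha])
      have := RhoAux.neg_le_Q l p (x - a)
      nlinarith [norm_nonneg (x - a)]
  set S : Set (PE l p) := {x ∈ X | ‖x - x₀‖ ≤ B} with hSdef
  have hx₀S : x₀ ∈ S := ⟨hx₀, by simp [hB0.le]⟩
  have hSne : S.Nonempty := ⟨x₀, hx₀S⟩
  have hSsub : S ⊆ X := fun x hx => hx.1
  have hbddX : ∀ a : PE l p, ‖a - a₀‖ ≤ 1 → BddBelow ((fun x => Q l p (x - a)) '' X) := by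
    intro a ha
    exact ⟨-(B+r)^2, by rintro y ⟨x, hx, rfl⟩; exact lower a ha x hx⟩
  have hbddS : ∀ a : PE l p, ‖a - a₀‖ ≤ 1 → BddBelow ((fun x => Q l p (x - a)) '' S) :=
    fun a ha => (hbddX a ha).mono (Set.image_mono hSsub)
  have hrhoeq : ∀ a : PE l p, ‖a - a₀‖ ≤ 1 →
      rho l p X a = sInf ((fun x => Q l p (x - a)) '' S) := by
    intro a ha
    apply le_antisymm
    · exact csInf_le_csInf (hbddX a ha) (hSne.image _) (Set.image_mono hSsub)
    · apply le_csInf ((Set.nonempty_of_mem hx₀).image _)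
      rintro y ⟨x, hx, rfl⟩
      by_cases hfar : B ≤ ‖x - x₀‖
      · have h1 : sInf ((fun x => Q l p (x - a)) '' S) ≤ Q l p (x₀ - a) :=
          csInf_le (hbddS a ha) ⟨x₀, hx₀S, rfl⟩
        have h2 : Q l p (x₀ - a) ≤ r^2 := by
          have hq := RhoAux.Q_le l p (x₀ - a)
          nlinarith [hx₀a a ha, norm_nonneg (x₀ - a)]
        linarith [far a ha x hx hfar]
      · push_neg at hfar
        exact csInf_le (hbddS a ha) ⟨x, ⟨hx, hfar.le⟩, rfl⟩
  set C : ℝ := 4 * (B + r) with hCdef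
  have hC0 : 0 < C := by rw [hCdef]; linarith
  have hlips : ∀ a b : PE l p, ‖a - a₀‖ ≤ 1 → ‖b - a₀‖ ≤ 1 →
      rho l p X a ≤ rho l p X b + C * ‖a - b‖ := by
    intro a b ha hb
    rw [hrhoeq a ha, hrhoeq b hb, ← sub_le_iff_le_add]
    apply le_csInf (hSne.image _)
    rintro y ⟨x, hxS, rfl⟩
    have hxa : ‖x - a‖ ≤ B + r := by
      have h : x - a = (x - x₀) + (x₀ - a) := by abel
      rw [h]; exact le_trans (norm_add_le _ _) (by linarith [hx₀a a ha, hxS.2])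
    have hxb : ‖x - b‖ ≤ B + r := by
      have h : x - b = (x - x₀) + (x₀ - b) := by abel
      rw [h]; exact le_trans (norm_add_le _ _) (by linarith [hx₀a b hb, hxS.2])
    have hd : |Q l p (x - a) - Q l p (x - b)| ≤ C * ‖a - b‖ := by
      have hqd := RhoAux.Q_diff l p (x - a) (x - b)
      have he : (x - a) - (x - b) = b - a := by abel
      rw [he, norm_sub_rev b a] at hqd
      refine le_trans hqd ?_
      refine mul_le_mul_of_nonneg_right ?_ (norm_nonneg _)
      rw [hCdef]; linarith
    have h1 : sInf ((fun x => Q l p (x - a)) '' S) ≤ Q l p (x - a) :=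
      csInf_le (hbddS a ha) ⟨x, hxS, rfl⟩
    have habs := abs_le.mp hd
    linarith [habs.1, habs.2]
  rw [Metric.continuousAt_iff]
  intro ε hε
  refine ⟨min 1 (ε / (C + 1)), lt_min one_pos (by positivity), ?_⟩
  intro a ha
  rw [Real.dist_eq]
  rw [dist_eq_norm] at ha
  have ha1 : ‖a - a₀‖ ≤ 1 := le_of_lt (lt_of_lt_of_le ha (min_le_left _ _))
  have h0 : ‖(a₀ : PE l p) - a₀‖ ≤ 1 := by simp
  have h1 := hlips a a₀ ha1 h0
  have h2 := hlips a₀ a h0 ha1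
  rw [norm_sub_rev a₀ a] at h2
  have habs : |rho l p X a - rho l p X a₀| ≤ C * ‖a - a₀‖ :=
    abs_le.2 ⟨by linarith, by linarith⟩
  have hd2 : ‖a - a₀‖ < ε / (C + 1) := lt_of_lt_of_le ha (min_le_right _ _)
  have h3 : C * ‖a - a₀‖ < ε := by
    have h4 : C * ‖a - a₀‖ < C * (ε / (C + 1)) :=
      mul_lt_mul_of_pos_left hd2 hC0
    have h5 : C * (ε / (C + 1)) < ε := by
      rw [mul_div_assoc', div_lt_iff₀ (by linarith : (0:ℝ) < C + 1)]
      nlinarith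
    linarith
  exact lt_of_le_of_lt habs h3
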